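/- The function x ↦ log(1 + x^q / p) / x is strictly decreasing on (0, ∞) for any fixed p > 0 and 0 < q ≤ 1. -/

import Mathlib

lemma key_log_ineq (q t : ℝ) (hq0 : 0 < q) (hq1 : q ≤ 1) (ht : 0 < t) :
    q * t / (1 + t) < Real.log (1 + t) := by
  have h1t : (0:ℝ) < 1 + t := by linarith
  have hne : 1 / (1 + t) ≠ 1 := by
    have : 1 / (1 + t) < 1 := by
      rw [div_lt_one h1t]; linarith
    exact ne_of_lt this
  have h := Real.log_lt_sub_one_of_pos (by positivity : (0:ℝ) < 1 / (1 + t)) hne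
  rw [one_div, Real.log_inv] at h
  have heq : t / (1 + t) = 1 - 1 / (1 + t) := by field_simp; ring
  rw [one_div] at heq
  have h2 : t / (1 + t) < Real.log (1 + t) := by
    rw [heq]; linarith
  have h3 : q * t / (1 + t) ≤ t / (1 + t) := by
    gcongr
    nlinarith
  linarith

/-- x ↦ log(1 + x^q/p) / x is strictly decreasing on (0, ∞). -/
theorem hpq_div_strictAnti (p q : ℝ) (hp : 0 < p) (hq0 : 0 < q) (hq1 : q ≤ 1) :
    StrictAntiOn (fun x : ℝ => Real.log (1 + x ^ q / p) / x) (Set.Ioi 0) := by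
  have hderiv : ∀ x : ℝ, 0 < x →
      HasDerivAt (fun x : ℝ => Real.log (1 + x ^ q / p) / x)
        (((q * x ^ (q - 1) / p) / (1 + x ^ q / p) * x - Real.log (1 + x ^ q / p) * 1) / x ^ 2) x := by
    intro x hx
    have hpos : 0 < 1 + x ^ q / p := by
      have := Real.rpow_pos_of_pos hx q
      positivity
    have h1 : HasDerivAt (fun x : ℝ => x ^ q) (q * x ^ (q - 1)) x :=
      Real.hasDerivAt_rpow_const (Or.inl hx.ne')
    have h3 : HasDerivAt (fun x : ℝ => 1 + x ^ q / p) (q * x ^ (q - 1) / p) x :=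
      (h1.div_const p).const_add 1
    have h4 : HasDerivAt (fun x : ℝ => Real.log (1 + x ^ q / p))
        ((q * x ^ (q - 1) / p) / (1 + x ^ q / p)) x := h3.log hpos.ne'
    exact h4.div (hasDerivAt_id x) hx.ne'
  apply strictAntiOn_of_deriv_neg (convex_Ioi 0)
  · exact fun x hx => ((hderiv x hx).continuousAt).continuousWithinAt
  · intro x hx
    rw [interior_Ioi] at hx
    have hx : (0:ℝ) < x := hx
    rw [(hderiv x hx).deriv]
    have hxq : 0 < x ^ q := Real.rpow_pos_of_pos hx q
    have hpos : 0 < 1 + x ^ q / p := by positivity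
    apply div_neg_of_neg_of_pos _ (by positivity)
    have hxx : x ^ (q - 1) * x = x ^ q := by
      rw [← Real.rpow_add_one hx.ne' (q-1)]
      norm_num
    have hnum : (q * x ^ (q - 1) / p) / (1 + x ^ q / p) * x
        = q * (x ^ q / p) / (1 + x ^ q / p) := by
      field_simp
      rw [hxx]
    rw [hnum]
    have := key_log_ineq q (x ^ q / p) hq0 hq1 (by positivity)
    linarith
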